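/- Let c > 0 satisfy cosh²(1/2) + 4c²·sinh²(1/2) > e² (for instance any c ≥ 5/2), and let P = exp(A⁽²⁾)·exp(A⁽¹⁾) where A⁽¹⁾ = [[−1, c],[1/(4c), −1]] and A⁽²⁾ = [[−1, 1/(4c)],[c, −1]]. Then there exist a real number μ > 1 and a vector w = (w₁, w₂) with w₁ > 0 and w₂ > 0 such that P·w = μ·w; consequently Pⁿ·w = μⁿ·w for all n ∈ ℕ and the Euclidean norms ‖Pⁿ·w‖ = μⁿ·‖w‖ tend to infinity as n → ∞, even though every real eigenvalue of A⁽¹⁾ and of A⁽²⁾ is negative (equal to −1/2 or −3/2). -/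

import Mathlib

open Matrix Filter

lemma diag2 (x y : ℝ) : (Matrix.diagonal ![x, y] : Matrix (Fin 2) (Fin 2) ℝ) = !![x, 0; 0, y] := by
  ext i j
  fin_cases i <;> fin_cases j <;> simp [Matrix.diagonal]

lemma expdiag2 (x y : ℝ) :
    NormedSpace.exp (Matrix.diagonal ![x, y] : Matrix (Fin 2) (Fin 2) ℝ)
      = !![Real.exp x, 0; 0, Real.exp y] := by
  rw [Matrix.exp_diagonal]
  have h : NormedSpace.exp (![x, y] : Fin 2 → ℝ) = ![Real.exp x, Real.exp y] := by
    funext i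
    fin_cases i <;> simp [Real.exp_eq_exp_ℝ]
  rw [h, diag2]

lemma expA1 (c : ℝ) (hc : 0 < c) :
    NormedSpace.exp (!![-1, c; 1/(4*c), -1] : Matrix (Fin 2) (Fin 2) ℝ)
      = !![(Real.exp (-(1/2)) + Real.exp (-(3/2)))/2, c*(Real.exp (-(1/2)) - Real.exp (-(3/2)));
           (Real.exp (-(1/2)) - Real.exp (-(3/2)))/(4*c),
           (Real.exp (-(1/2)) + Real.exp (-(3/2)))/2] := by
  have hc' : c ≠ 0 := ne_of_gt hc
  set V : Matrix (Fin 2) (Fin 2) ℝ := !![2*c, 2*c; 1, -1] with hV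
  set Vi : Matrix (Fin 2) (Fin 2) ℝ := !![1/(4*c), 1/2; 1/(4*c), -(1/2)] with hVi
  have hVVi : V * Vi = 1 := by
    ext i j
    fin_cases i <;> fin_cases j <;>
      · simp [hV, hVi, Matrix.mul_apply, Fin.sum_univ_two]
        try field_simp
        try ring
  have hViV : Vi * V = 1 := by
    ext i j
    fin_cases i <;> fin_cases j <;>
      · simp [hV, hVi, Matrix.mul_apply, Fin.sum_univ_two]
        try field_simp
        try ring
  have hU : IsUnit V := ⟨⟨V, Vi, hVVi, hViV⟩, rfl⟩
  have hVinv : V⁻¹ = Vi := Matrix.inv_eq_right_inv hVVi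
  have hA : (!![-1, c; 1/(4*c), -1] : Matrix (Fin 2) (Fin 2) ℝ)
      = V * (Matrix.diagonal ![-(1/2), -(3/2)]) * V⁻¹ := by
    rw [hVinv, diag2]
    ext i j
    fin_cases i <;> fin_cases j <;>
      · simp [hV, hVi, Matrix.mul_apply, Fin.sum_univ_two]
        try field_simp
        try ring
  rw [hA, Matrix.exp_conj V _ hU, expdiag2, hVinv]
  ext i j
  fin_cases i <;> fin_cases j <;>
    · simp [hV, hVi, Matrix.mul_apply, Fin.sum_univ_two]
      try field_simp
      try ring

lemma expA2 (c : ℝ) (hc : 0 < c) :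
    NormedSpace.exp (!![-1, 1/(4*c); c, -1] : Matrix (Fin 2) (Fin 2) ℝ)
      = !![(Real.exp (-(1/2)) + Real.exp (-(3/2)))/2,
           (Real.exp (-(1/2)) - Real.exp (-(3/2)))/(4*c);
           c*(Real.exp (-(1/2)) - Real.exp (-(3/2))),
           (Real.exp (-(1/2)) + Real.exp (-(3/2)))/2] := by
  have hc' : c ≠ 0 := ne_of_gt hc
  set V : Matrix (Fin 2) (Fin 2) ℝ := !![1, 1; 2*c, -(2*c)] with hV
  set Vi : Matrix (Fin 2) (Fin 2) ℝ := !![1/2, 1/(4*c); 1/2, -(1/(4*c))] with hVi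
  have hVVi : V * Vi = 1 := by
    ext i j
    fin_cases i <;> fin_cases j <;>
      · simp [hV, hVi, Matrix.mul_apply, Fin.sum_univ_two]
        try field_simp
        try ring
  have hViV : Vi * V = 1 := by
    ext i j
    fin_cases i <;> fin_cases j <;>
      · simp [hV, hVi, Matrix.mul_apply, Fin.sum_univ_two]
        try field_simp
        try ring
  have hU : IsUnit V := ⟨⟨V, Vi, hVVi, hViV⟩, rfl⟩
  have hVinv : V⁻¹ = Vi := Matrix.inv_eq_right_inv hVVi
  have hA : (!![-1, 1/(4*c); c, -1] : Matrix (Fin 2) (Fin 2) ℝ)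
      = V * (Matrix.diagonal ![-(1/2), -(3/2)]) * V⁻¹ := by
    rw [hVinv, diag2]
    ext i j
    fin_cases i <;> fin_cases j <;>
      · simp [hV, hVi, Matrix.mul_apply, Fin.sum_univ_two]
        try field_simp
        try ring
  rw [hA, Matrix.exp_conj V _ hU, expdiag2, hVinv]
  ext i j
  fin_cases i <;> fin_cases j <;>
    · simp [hV, hVi, Matrix.mul_apply, Fin.sum_univ_two]
      try field_simp
      try ring

set_option maxHeartbeats 1000000 in
theorem stmt_18 (c : ℝ) (hc : 0 < c)
    (hbig : Real.cosh (1/2) ^ 2 + 4*c^2 * Real.sinh (1/2) ^ 2 > Real.exp 2)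
    (P : Matrix (Fin 2) (Fin 2) ℝ)
    (hP : P = NormedSpace.exp (!![-1, 1/(4*c); c, -1] : Matrix (Fin 2) (Fin 2) ℝ)
        * NormedSpace.exp (!![-1, c; 1/(4*c), -1] : Matrix (Fin 2) (Fin 2) ℝ)) :
    (∃ μ : ℝ, 1 < μ ∧ ∃ w : Fin 2 → ℝ, 0 < w 0 ∧ 0 < w 1 ∧
      P.mulVec w = μ • w ∧
      (∀ n : ℕ, (P ^ n).mulVec w = μ ^ n • w) ∧
      (∀ n : ℕ, ‖(WithLp.equiv 2 (Fin 2 → ℝ)).symm ((P ^ n).mulVec w)‖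
          = μ ^ n * ‖(WithLp.equiv 2 (Fin 2 → ℝ)).symm w‖) ∧
      Tendsto (fun n : ℕ => ‖(WithLp.equiv 2 (Fin 2 → ℝ)).symm ((P ^ n).mulVec w)‖)
        atTop atTop) ∧
    (∀ lam : ℝ,
      (∃ v : Fin 2 → ℝ, v ≠ 0 ∧
        (!![-1, c; 1/(4*c), -1] : Matrix (Fin 2) (Fin 2) ℝ).mulVec v = lam • v) →
      lam < 0) ∧
    (∀ lam : ℝ,
      (∃ v : Fin 2 → ℝ, v ≠ 0 ∧
        (!![-1, 1/(4*c); c, -1] : Matrix (Fin 2) (Fin 2) ℝ).mulVec v = lam • v) →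
      lam < 0) := by
  have hc' : c ≠ 0 := ne_of_gt hc
  refine ⟨?_, ?_, ?_⟩
  · -- main part
    have e1 := expA1 c hc
    have e2 := expA2 c hc
    set u : ℝ := Real.exp (-(1/2)) with hu
    set v : ℝ := Real.exp (-(3/2)) with hv
    have hupos : 0 < u := Real.exp_pos _
    have hvpos : 0 < v := Real.exp_pos _
    have huv : v < u := Real.exp_lt_exp.2 (by norm_num)
    set p : ℝ := (u + v)/2 with hpdef
    set q : ℝ := (u - v)/2 with hqdef
    have hppos : 0 < p := by rw [hpdef]; positivity
    have hqpos : 0 < q := by rw [hqdef]; linarith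
    set a : ℝ := p^2 + q^2/(4*c^2) with hadef
    set b : ℝ := p*q*(2*c + 1/(2*c)) with hbdef
    set d : ℝ := p^2 + 4*c^2*q^2 with hddef
    have hbpos : 0 < b := by rw [hbdef]; positivity
    clear_value u v p q a b d
    have hPeq : P = !![a, b; b, d] := by
      rw [hP, e2, e1]
      ext i j
      fin_cases i <;> fin_cases j <;>
        · simp [Matrix.mul_apply, Fin.sum_univ_two, hadef, hbdef, hddef, hpdef, hqdef]
          try field_simp
          try ring
    -- d > 1
    have hexp1 : Real.exp 1 * u = Real.exp (1/2) := by rw [hu, ← Real.exp_add]; norm_num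
    have hexp2 : Real.exp 1 * v = u := by rw [hu, hv, ← Real.exp_add]; norm_num
    have hE2 : Real.exp 2 = Real.exp 1 * Real.exp 1 := by rw [← Real.exp_add]; norm_num
    have hcosh : Real.cosh (1/2) = Real.exp 1 * p := by
      rw [Real.cosh_eq, hpdef, ← hu]
      linear_combination -(hexp1 + hexp2) / 2
    have hsinh : Real.sinh (1/2) = Real.exp 1 * q := by
      rw [Real.sinh_eq, hqdef, ← hu]
      linear_combination (hexp2 - hexp1) / 2
    have hd1 : 1 < d := by
      rw [hcosh, hsinh, hE2] at hbig
      rw [hddef]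
      nlinarith [Real.exp_pos 1, mul_pos (Real.exp_pos 1) (Real.exp_pos 1)]
    set r : ℝ := Real.sqrt (((d-a)/2)^2 + b^2) with hrdef
    clear_value r
    have hr2 : r^2 = ((d-a)/2)^2 + b^2 := by
      rw [hrdef]; exact Real.sq_sqrt (by positivity)
    have hrnn : 0 ≤ r := by rw [hrdef]; exact Real.sqrt_nonneg _
    have hrabs : |(d-a)/2| < r := by
      nlinarith [sq_abs ((d-a)/2), abs_nonneg ((d-a)/2), mul_pos hbpos hbpos]
    set μ : ℝ := (a+d)/2 + r with hμdef
    clear_value μ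
    have hμ1 : 1 < μ := by
      have h1 := le_abs_self ((d-a)/2)
      rw [hμdef]; linarith
    have hw1pos : 0 < μ - a := by
      have h2 := neg_abs_le ((d-a)/2)
      rw [hμdef]; linarith
    refine ⟨μ, hμ1, ![b, μ - a], by simp [hbpos], by simp [hw1pos], ?_⟩
    have hmul : P.mulVec ![b, μ - a] = μ • ![b, μ - a] := by
      funext i
      rw [hPeq]
      fin_cases i
      · simp [Matrix.mulVec, dotProduct, Fin.sum_univ_two]
        ring
      · simp [Matrix.mulVec, dotProduct, Fin.sum_univ_two]
        rw [hμdef]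
        first
        | linear_combination hr2
        | linear_combination -hr2
    have hpow : ∀ n : ℕ, (P ^ n).mulVec ![b, μ - a] = μ ^ n • ![b, μ - a] := by
      intro n
      induction n with
      | zero => simp [Matrix.one_mulVec]
      | succ n ih =>
        rw [pow_succ', ← Matrix.mulVec_mulVec, ih, Matrix.mulVec_smul, hmul, smul_smul, pow_succ]
    have hK : 0 < ‖(WithLp.equiv 2 (Fin 2 → ℝ)).symm ![b, μ - a]‖ := by
      rw [norm_pos_iff]
      intro h
      have h0 := congrFun (congrArg (WithLp.equiv 2 (Fin 2 → ℝ)) h) 0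
      simp at h0
      exact absurd h0 (ne_of_gt hbpos)
    have hnorm : ∀ n : ℕ, ‖(WithLp.equiv 2 (Fin 2 → ℝ)).symm ((P ^ n).mulVec ![b, μ - a])‖
        = μ ^ n * ‖(WithLp.equiv 2 (Fin 2 → ℝ)).symm ![b, μ - a]‖ := by
      intro n
      rw [hpow n, show (WithLp.equiv 2 (Fin 2 → ℝ)).symm (μ ^ n • ![b, μ - a]) = μ ^ n • (WithLp.equiv 2 (Fin 2 → ℝ)).symm ![b, μ - a] from rfl, norm_smul, Real.norm_eq_abs,
        abs_of_pos (pow_pos (lt_trans one_pos hμ1) n)]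
    refine ⟨hmul, hpow, hnorm, ?_⟩
    have : (fun n : ℕ => ‖(WithLp.equiv 2 (Fin 2 → ℝ)).symm ((P ^ n).mulVec ![b, μ - a])‖)
        = fun n : ℕ => μ ^ n * ‖(WithLp.equiv 2 (Fin 2 → ℝ)).symm ![b, μ - a]‖ :=
      funext hnorm
    rw [this]
    exact (tendsto_pow_atTop_atTop_of_one_lt hμ1).atTop_mul_const hK
  · -- eigenvalues of A1
    rintro lam ⟨v, hv0, hv⟩
    have h0 := congrFun hv 0
    have h1 := congrFun hv 1
    simp [Matrix.mulVec, dotProduct, Fin.sum_univ_two] at h0 h1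
    by_cases hv00 : v 0 = 0
    · exfalso
      have hv1 : v 1 = 0 := by
        rw [hv00] at h0
        simp [hc'] at h0
        exact h0
      apply hv0
      funext i
      match i with
      | 0 => simpa using hv00
      | 1 => simpa using hv1
    · have hv11 : v 1 ≠ 0 := by
        intro hv11
        apply hv00
        rw [hv11] at h1
        simp [hc'] at h1
        exact h1
      have key : (lam + 1)^2 * (v 0 * v 1) = (1/4) * (v 0 * v 1) := by
        have e0 : (lam + 1) * v 0 = c * v 1 := by linarith
        have e1' : (lam + 1) * v 1 = c⁻¹ * 4⁻¹ * v 0 := by linarith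
        calc (lam + 1)^2 * (v 0 * v 1) = ((lam+1)*v 0) * ((lam+1)*v 1) := by ring
        _ = (c * v 1) * (c⁻¹ * 4⁻¹ * v 0) := by rw [e0, e1']
        _ = (1/4) * (v 0 * v 1) := by field_simp
      have hne : v 0 * v 1 ≠ 0 := mul_ne_zero hv00 hv11
      have key2 : ((lam+1)^2 - 1/4) * (v 0 * v 1) = 0 := by linear_combination key
      rcases mul_eq_zero.mp key2 with h | h
      · have hlam : (lam + 1)^2 = 1/4 := by linarith
        nlinarith [sq_nonneg lam]
      · exact absurd h hne
  · -- eigenvalues of A2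
    rintro lam ⟨v, hv0, hv⟩
    have h0 := congrFun hv 0
    have h1 := congrFun hv 1
    simp [Matrix.mulVec, dotProduct, Fin.sum_univ_two] at h0 h1
    by_cases hv00 : v 0 = 0
    · exfalso
      have hv1 : v 1 = 0 := by
        rw [hv00] at h0
        simp [hc'] at h0
        exact h0
      apply hv0
      funext i
      match i with
      | 0 => simpa using hv00
      | 1 => simpa using hv1
    · have hv11 : v 1 ≠ 0 := by
        intro hv11
        apply hv00
        rw [hv11] at h1
        simp [hc'] at h1
        exact h1
      have key : (lam + 1)^2 * (v 0 * v 1) = (1/4) * (v 0 * v 1) := by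
        have e0 : (lam + 1) * v 0 = c⁻¹ * 4⁻¹ * v 1 := by linarith
        have e1' : (lam + 1) * v 1 = c * v 0 := by linarith
        calc (lam + 1)^2 * (v 0 * v 1) = ((lam+1)*v 0) * ((lam+1)*v 1) := by ring
        _ = (c⁻¹ * 4⁻¹ * v 1) * (c * v 0) := by rw [e0, e1']
        _ = (1/4) * (v 0 * v 1) := by field_simp
      have hne : v 0 * v 1 ≠ 0 := mul_ne_zero hv00 hv11
      have key2 : ((lam+1)^2 - 1/4) * (v 0 * v 1) = 0 := by linear_combination key
      rcases mul_eq_zero.mp key2 with h | h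
      · have hlam : (lam + 1)^2 = 1/4 := by linarith
        nlinarith [sq_nonneg lam]
      · exact absurd h hne
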